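/- Let d ≥ 3 be odd and n ≥ 1. Consider the map h_1: P^n → P^n sending [x_0,…,x_n] to [x_0^{d-2},…,x_n^{d-2}], restricted to the hypersurface V(x_0^d + ⋯ + x_n^d). Then this restriction is generically injective: for generic p on the hypersurface, if q lies on the hypersurface and h_1(p) = h_1(q) in P^n, then p = q. -/

import Mathlib

open MvPolynomial Finset

/-- A nonzero linear form is a nonzero polynomial. -/
private lemma linform_ne_zero {K : Type*} [Field K] {n : ℕ} (u : Fin n → K)
    (h : ∃ j, u j ≠ 0) :
    (∑ j, MvPolynomial.C (u j) * MvPolynomial.X j : MvPolynomial (Fin n) K) ≠ 0 := by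
  obtain ⟨j, hj⟩ := h
  intro h0
  apply hj
  have := congrArg (MvPolynomial.eval (Pi.single j 1)) h0
  simpa [Pi.single_apply, mul_ite, Finset.sum_ite_eq'] using this

/-- For odd `d ≥ 3`, the coordinatewise `(d-2)`-power map
`[x_0 : … : x_n] ↦ [x_0^{d-2} : … : x_n^{d-2}]` is generically injective on the Fermat
hypersurface `V(x_0^d + ⋯ + x_n^d) ⊂ P^n`: there is a polynomial `P` not vanishing
identically on the hypersurface such that any two points of the hypersurface with the
same image, one of which satisfies `P ≠ 0`, coincide projectively. -/
theorem power_map_generically_injective_on_fermat_odd {K : Type*} [Field K]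
    [IsAlgClosed K] [CharZero K] {n d : ℕ} (hn : 1 ≤ n) (hd : 3 ≤ d) (hodd : Odd d) :
    ∃ P : MvPolynomial (Fin (n + 1)) K,
      (∃ p₀ : Fin (n + 1) → K, p₀ ≠ 0 ∧ (∑ i, p₀ i ^ d) = 0 ∧
        MvPolynomial.eval p₀ P ≠ 0) ∧
      ∀ p q : Fin (n + 1) → K, p ≠ 0 → q ≠ 0 →
        (∑ i, p i ^ d) = 0 → (∑ i, q i ^ d) = 0 →
        MvPolynomial.eval p P ≠ 0 →
        (∃ c : K, c ≠ 0 ∧ ∀ i, q i ^ (d - 2) = c * p i ^ (d - 2)) →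
        ∃ t : K, t ≠ 0 ∧ ∀ i, q i = t * p i := by
  classical
  set m := d - 2 with hm
  have hmd : m + 2 = d := Nat.sub_add_cancel (by omega)
  have hm1 : 0 < m := by omega
  have hmodd : Odd m := by
    obtain ⟨k, hk⟩ := hodd
    exact ⟨k - 1, by omega⟩
  have hd0 : 0 < d := by omega
  set R : Finset K := Polynomial.nthRootsFinset m (1 : K) with hR
  set S : Finset (Fin (n + 1) → K) :=
    (Fintype.piFinset fun _ => R).filter (fun w => ¬ ∀ i, w i = w 0) with hS
  set P : MvPolynomial (Fin (n + 1)) K :=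
    (∏ i, X i) * ∏ w ∈ S, (∑ i, C (w i) * X i ^ d) with hP
  -- evaluation of P
  have hPeval : ∀ x : Fin (n + 1) → K,
      MvPolynomial.eval x P = (∏ i, x i) * ∏ w ∈ S, (∑ i, w i * x i ^ d) := by
    intro x; simp [hP]
  refine ⟨P, ?_, ?_⟩
  · -- existence of a good point on the Fermat hypersurface
    set Q : MvPolynomial (Fin n) K :=
      ((∑ j, C (1 : K) * X j) * ∏ j, X j) *
        ∏ w ∈ S, (∑ j, C (w j.succ - w 0) * X j) with hQdef
    have hQ : Q ≠ 0 := by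
      have h1 : (∑ j, C (1 : K) * X j : MvPolynomial (Fin n) K) ≠ 0 := by
        apply linform_ne_zero
        exact ⟨⟨0, hn⟩, one_ne_zero⟩
      have h2 : (∏ j, X j : MvPolynomial (Fin n) K) ≠ 0 :=
        Finset.prod_ne_zero_iff.mpr fun j _ => MvPolynomial.X_ne_zero j
      have h3 : (∏ w ∈ S, (∑ j, C (w j.succ - w 0) * X j) : MvPolynomial (Fin n) K) ≠ 0 := by
        apply Finset.prod_ne_zero_iff.mpr
        intro w hw
        apply linform_ne_zero
        rw [hS, Finset.mem_filter] at hw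
        obtain ⟨-, hw2⟩ := hw
        push_neg at hw2
        obtain ⟨i, hi⟩ := hw2
        have hi0 : i ≠ 0 := fun h => hi (by rw [h])
        refine ⟨i.pred hi0, ?_⟩
        rw [Fin.succ_pred]
        exact sub_ne_zero.mpr hi
      exact mul_ne_zero (mul_ne_zero h1 h2) h3
    obtain ⟨b, hb⟩ : ∃ b : Fin n → K, MvPolynomial.eval b Q ≠ 0 := by
      by_contra h
      push_neg at h
      exact hQ (MvPolynomial.funext fun x => by rw [h x, map_zero])
    have hbsum : (∑ j, b j) ≠ 0 := by
      intro h
      apply hb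
      rw [hQdef]
      simp [h]
    have hbne : ∀ j, b j ≠ 0 := by
      intro j hj
      apply hb
      rw [hQdef]
      simp only [map_mul]
      have : MvPolynomial.eval b (∏ j, X j : MvPolynomial (Fin n) K) = 0 := by
        rw [map_prod]
        exact Finset.prod_eq_zero (Finset.mem_univ j) (by simpa using hj)
      rw [this, mul_zero, zero_mul]
    have hbw : ∀ w ∈ S, (∑ j, (w j.succ - w 0) * b j) ≠ 0 := by
      intro w hw h
      apply hb
      rw [hQdef, map_mul, map_prod]
      refine mul_eq_zero_of_right _ (Finset.prod_eq_zero hw ?_)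
      simpa using h
    -- build the point
    choose a ha using fun j => IsAlgClosed.exists_pow_nat_eq (b j) hd0
    obtain ⟨z, hz⟩ := IsAlgClosed.exists_pow_nat_eq (-(∑ j, b j)) hd0
    have hz0 : z ≠ 0 := by
      intro h
      rw [h, zero_pow (by omega : d ≠ 0)] at hz
      exact hbsum (neg_eq_zero.mp hz.symm)
    have ha0 : ∀ j, a j ≠ 0 := by
      intro j h
      apply hbne j
      rw [← ha j, h, zero_pow (by omega)]
    refine ⟨Fin.cons z a, ?_, ?_, ?_⟩
    · intro h
      exact hz0 (by simpa using congrFun h 0)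
    · rw [Fin.sum_univ_succ]
      simp only [Fin.cons_zero, Fin.cons_succ]
      rw [hz]
      simp [ha]
    · rw [hPeval]
      apply mul_ne_zero
      · apply Finset.prod_ne_zero_iff.mpr
        intro i _
        rcases Fin.eq_zero_or_eq_succ i with h | ⟨j, rfl⟩
        · rw [h, Fin.cons_zero]; exact hz0
        · rw [Fin.cons_succ]; exact ha0 j
      · apply Finset.prod_ne_zero_iff.mpr
        intro w hw
        have : (∑ i, w i * (Fin.cons z a : Fin (n + 1) → K) i ^ d) = ∑ j, (w j.succ - w 0) * b j := by
          rw [Fin.sum_univ_succ]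
          simp only [Fin.cons_zero, Fin.cons_succ]
          rw [hz]
          simp only [ha, sub_mul, Finset.sum_sub_distrib]
          rw [mul_neg, ← Finset.mul_sum]
          ring
        rw [this]
        exact hbw w hw
  · -- generic injectivity
    intro p q hp0 hq0 hpF hqF hPp ⟨c, hc, hcq⟩
    rw [hPeval] at hPp
    have hpne : ∀ i, p i ≠ 0 := by
      intro i hi
      apply hPp
      apply mul_eq_zero_of_left
      exact Finset.prod_eq_zero (Finset.mem_univ i) hi
    have hpw : ∀ w ∈ S, (∑ i, w i * p i ^ d) ≠ 0 := by
      intro w hw h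
      exact hPp (mul_eq_zero_of_right _ (Finset.prod_eq_zero hw h))
    obtain ⟨γ, hγ⟩ := IsAlgClosed.exists_pow_nat_eq c hm1
    have hγ0 : γ ≠ 0 := by
      intro h; rw [h, zero_pow (by omega)] at hγ; exact hc hγ.symm
    set ζ : Fin (n + 1) → K := fun i => q i * (γ * p i)⁻¹ with hζ
    have hqζ : ∀ i, q i = γ * ζ i * p i := by
      intro i
      have h := mul_inv_cancel₀ (mul_ne_zero hγ0 (hpne i))
      calc q i = q i * ((γ * p i) * (γ * p i)⁻¹) := by rw [h, mul_one]
        _ = γ * (q i * (γ * p i)⁻¹) * p i := by ring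
        _ = γ * ζ i * p i := rfl
    have hζm : ∀ i, ζ i ^ m = 1 := by
      intro i
      rw [hζ]
      simp only
      rw [mul_pow, inv_pow, mul_pow, hcq i, hγ]
      exact mul_inv_cancel₀ (mul_ne_zero hc (pow_ne_zero _ (hpne i)))
    have hζ0 : ∀ i, ζ i ≠ 0 := by
      intro i h
      have := hζm i
      rw [h, zero_pow (by omega)] at this
      exact one_ne_zero this.symm
    -- the tuple of squares lies in the root-of-unity cube
    have hζd : ∀ i, ζ i ^ d = ζ i ^ 2 := by
      intro i
      rw [← hmd, pow_add, hζm i, one_mul]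
    have hsum : (∑ i, (ζ i ^ 2) * p i ^ d) = 0 := by
      have : (∑ i, q i ^ d) = γ ^ d * ∑ i, (ζ i ^ 2) * p i ^ d := by
        rw [Finset.mul_sum]
        apply Finset.sum_congr rfl
        intro i _
        rw [hqζ i, mul_pow, mul_pow, hζd i]
        ring
      rw [hqF] at this
      have hγd : γ ^ d ≠ 0 := pow_ne_zero _ hγ0
      exact (mul_eq_zero.mp this.symm).resolve_left hγd
    have hwS : (fun i => ζ i ^ 2) ∉ S := fun hw => hpw _ hw hsum
    have hwin : (fun i => ζ i ^ 2) ∈ Fintype.piFinset fun _ : Fin (n + 1) => R := by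
      rw [Fintype.mem_piFinset]
      intro i
      rw [hR, Polynomial.mem_nthRootsFinset hm1 (1 : K), ← pow_mul, mul_comm, pow_mul, hζm i, one_pow]
    have hconst : ∀ i, ζ i ^ 2 = ζ 0 ^ 2 := by
      intro i
      by_contra h
      apply hwS
      rw [hS, Finset.mem_filter]
      exact ⟨hwin, fun hall => h (hall i)⟩
    -- squares equal + odd power equal ⇒ equal
    have hζeq : ∀ i, ζ i = ζ 0 := by
      obtain ⟨k, hk⟩ := hmodd
      intro i
      have h2k : ζ i ^ (2 * k) = ζ 0 ^ (2 * k) := by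
        rw [pow_mul, pow_mul, hconst i]
      have hkm : 2 * k + 1 = m := by omega
      have h1 : ζ i * ζ 0 ^ (2 * k) = ζ 0 * ζ 0 ^ (2 * k) :=
        calc ζ i * ζ 0 ^ (2 * k) = ζ i * ζ i ^ (2 * k) := by rw [h2k]
          _ = ζ i ^ (2 * k + 1) := (pow_succ' _ _).symm
          _ = 1 := by rw [hkm]; exact hζm i
          _ = ζ 0 ^ (2 * k + 1) := by rw [hkm, hζm 0]
          _ = ζ 0 * ζ 0 ^ (2 * k) := pow_succ' _ _
      exact mul_right_cancel₀ (pow_ne_zero _ (hζ0 0)) h1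
    refine ⟨γ * ζ 0, mul_ne_zero hγ0 (hζ0 0), fun i => ?_⟩
    rw [hqζ i, hζeq i]
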